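/- For j = 1,2,3 let L_j > 0 and let σ_j : ℝ → ℝ be nonnegative, locally integrable, and identically zero on [−L_j/2, L_j/2], and let s₁ > 0. Define the stretched coordinates x̃ ∈ ℝ³ of x ∈ ℝ³ by x̃_j = x_j + s₁⁻¹ ∫₀^{x_j} σ_j(τ) dτ. Then for every x ∈ ℝ³ and every y ∈ ℝ³ with |y_j| ≤ L_j/2 for all j, one has s₁·|x̃ − y| ≥ ( Σ_{j=1}^{3} ( ∫₀^{x_j} σ_j(τ) dτ )² )^{1/2}, where |·| is the Euclidean norm on ℝ³. -/

import Mathlib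

open MeasureTheory

/-- Per-coordinate key estimate. -/
lemma key_coord (Lj : ℝ) (σj : ℝ → ℝ) (s₁ : ℝ) (hs₁ : 0 < s₁)
    (hnn : ∀ τ : ℝ, 0 ≤ σj τ)
    (hloc : LocallyIntegrable σj volume)
    (hzero : ∀ τ ∈ Set.Icc (-(Lj / 2)) (Lj / 2), σj τ = 0)
    (a b : ℝ) (hb : |b| ≤ Lj / 2) :
    |∫ τ in (0:ℝ)..a, σj τ| ≤ s₁ * |a + s₁⁻¹ * (∫ τ in (0:ℝ)..a, σj τ) - b| := by
  set I := ∫ τ in (0:ℝ)..a, σj τ with hI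
  have hval : s₁ * (a + s₁⁻¹ * I - b) = s₁ * (a - b) + I := by
    field_simp; ring
  have habs : s₁ * |a + s₁⁻¹ * I - b| = |s₁ * (a - b) + I| := by
    rw [← hval, abs_mul, abs_of_pos hs₁]
  rw [habs]
  -- if |a| ≤ Lj/2 then I = 0
  have hzeroI : |a| ≤ Lj / 2 → I = 0 := by
    intro ha
    have : ∀ τ ∈ Set.uIcc (0:ℝ) a, σj τ = 0 := by
      intro τ hτ
      apply hzero
      obtain ⟨h1, h2⟩ := abs_le.mp ha
      rcases Set.mem_uIcc.mp hτ with h | h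
      · exact ⟨by linarith [h.1], by linarith [h.2]⟩
      · exact ⟨by linarith [h.1], by linarith [h.2]⟩
    calc I = ∫ τ in (0:ℝ)..a, (0:ℝ) := intervalIntegral.integral_congr this
    _ = 0 := intervalIntegral.integral_zero
  rcases lt_trichotomy I 0 with hIneg | hIz | hIpos
  · -- I < 0 ⇒ a < -(Lj/2)
    have ha0 : a < 0 := by
      by_contra h
      push_neg at h
      have : 0 ≤ I := intervalIntegral.integral_nonneg h (fun τ _ => hnn τ)
      linarith
    have ha : a < -(Lj / 2) := by
      by_contra h
      push_neg at h
      have : |a| ≤ Lj / 2 := abs_le.mpr ⟨by linarith, by nlinarith [abs_nonneg b, hb, abs_nonneg a, neg_abs_le b]⟩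
      exact absurd (hzeroI this) (ne_of_lt hIneg)
    have hab : a - b ≤ 0 := by
      have := neg_abs_le b
      linarith [hb]
    have hsab : s₁ * (a - b) ≤ 0 := mul_nonpos_of_nonneg_of_nonpos hs₁.le hab
    rw [abs_of_neg hIneg, abs_of_neg (by linarith : s₁ * (a - b) + I < 0)]
    linarith
  · simp [hIz, abs_nonneg]; positivity
  · -- I > 0 ⇒ a > Lj/2
    have ha0 : 0 ≤ a := by
      by_contra h
      push_neg at h
      have : I ≤ 0 := by
        rw [hI, intervalIntegral.integral_symm]
        simp only [neg_nonpos]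
        exact intervalIntegral.integral_nonneg h.le (fun τ _ => hnn τ)
      linarith
    have ha : Lj / 2 < a := by
      by_contra h
      push_neg at h
      have : |a| ≤ Lj / 2 := abs_le.mpr ⟨by nlinarith [abs_nonneg b, hb, neg_abs_le b], h⟩
      exact absurd (hzeroI this) (ne_of_gt hIpos)
    have hab : 0 ≤ a - b := by
      have := le_abs_self b
      linarith [hb]
    have hsab : 0 ≤ s₁ * (a - b) := mul_nonneg hs₁.le hab
    rw [abs_of_pos hIpos, abs_of_pos (by linarith : 0 < s₁ * (a - b) + I)]
    linarith

/-- For the real coordinate stretching, s₁ · |x̃ - y| dominates the Euclidean norm of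
the vector of integrals (∫₀^{x_j} σ_j(τ) dτ)_{j=1,2,3}, whenever |y_j| ≤ L_j/2. -/
theorem stretched_distance_ge_damping (L : Fin 3 → ℝ) (σ : Fin 3 → ℝ → ℝ) (s₁ : ℝ)
    (hL : ∀ j, 0 < L j) (hs₁ : 0 < s₁)
    (hnn : ∀ j, ∀ τ : ℝ, 0 ≤ σ j τ)
    (hloc : ∀ j, LocallyIntegrable (σ j) volume)
    (hzero : ∀ j, ∀ τ ∈ Set.Icc (-(L j / 2)) (L j / 2), σ j τ = 0)
    (x y : EuclideanSpace ℝ (Fin 3))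
    (xt : EuclideanSpace ℝ (Fin 3))
    (hxt : ∀ j, xt j = x j + s₁⁻¹ * ∫ τ in (0:ℝ)..(x j), σ j τ)
    (hy : ∀ j, |y j| ≤ L j / 2) :
    Real.sqrt (∑ j : Fin 3, (∫ τ in (0:ℝ)..(x j), σ j τ) ^ 2) ≤ s₁ * ‖xt - y‖ := by
  have hkey : ∀ j : Fin 3, |∫ τ in (0:ℝ)..(x j), σ j τ| ≤ s₁ * |xt j - y j| := by
    intro j
    have := key_coord (L j) (σ j) s₁ hs₁ (hnn j) (hloc j) (hzero j) (x j) (y j) (hy j)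
    rwa [hxt j]
  have hnorm : ‖xt - y‖ = Real.sqrt (∑ j : Fin 3, (xt j - y j) ^ 2) := by
    rw [EuclideanSpace.norm_eq]
    congr 1
    apply Finset.sum_congr rfl
    intro j _
    rw [show (xt - y) j = xt j - y j from rfl, Real.norm_eq_abs, sq_abs]
  rw [hnorm, ← Real.sqrt_sq hs₁.le, ← Real.sqrt_mul (sq_nonneg s₁)]
  apply Real.sqrt_le_sqrt
  rw [Finset.mul_sum]
  apply Finset.sum_le_sum
  intro j _
  have h := hkey j
  calc (∫ τ in (0:ℝ)..(x j), σ j τ) ^ 2 = |∫ τ in (0:ℝ)..(x j), σ j τ| ^ 2 := (sq_abs _).symm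
  _ ≤ (s₁ * |xt j - y j|) ^ 2 := by
      apply pow_le_pow_left₀ (abs_nonneg _) h
  _ = s₁ ^ 2 * (xt j - y j) ^ 2 := by rw [mul_pow, sq_abs]
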